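/- Let E = ℝ^d, let σ > 0 and r ≥ 2, and let φ : E → ℝ be differentiable and (σ,r)-uniformly convex. Let f_1, …, f_m : E → ℝ be convex, differentiable, and G_l-Lipschitz. Suppose w_1, …, w_m, w̄ ∈ E satisfy ‖∇φ(w_i) − ∇φ(w̄)‖ ≤ Δ for all i, where Δ ≥ 0. Then for every i, ‖w_i − w̄‖ ≤ (rΔ/(2σ))^{1/(r−1)}, and consequently for every x ∈ E, ∑_{i=1}^m f_i(w̄) − ∑_{i=1}^m f_i(w_i) ≤ m G_l (rΔ/(2σ))^{1/(r−1)}. -/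

import Mathlib

open RealInnerProductSpace

/-- **from mirror-space consensus to function-value gap.**
Let `φ : ℝ^d → ℝ` be differentiable and `(σ,r)`-uniformly convex, and let the
local losses `f i` be convex, differentiable, and `G_l`-Lipschitz.  If
`‖∇φ(w i) − ∇φ(w̄)‖ ≤ Δ` for all `i`, then `‖w i − w̄‖ ≤ (rΔ/(2σ))^(1/(r−1))`
for every `i`, and consequently
`∑ i, f i w̄ − ∑ i, f i (w i) ≤ m G_l (rΔ/(2σ))^(1/(r−1))`. -/
theorem consensus_to_function_gap
    {d m : ℕ} (hm : 1 ≤ m)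
    (σ r : ℝ) (hσ : 0 < σ) (hr : 2 ≤ r)
    (φ : EuclideanSpace ℝ (Fin d) → ℝ)
    (hφdiff : Differentiable ℝ φ)
    (hUC : ∀ x y : EuclideanSpace ℝ (Fin d),
      φ y + ⟪gradient φ y, x - y⟫ + (σ / r) * ‖x - y‖ ^ r ≤ φ x)
    (f : Fin m → EuclideanSpace ℝ (Fin d) → ℝ)
    (hconv : ∀ i, ConvexOn ℝ Set.univ (f i))
    (hfdiff : ∀ i, Differentiable ℝ (f i))
    (G_l : ℝ) (hG : 0 ≤ G_l)
    (hLip : ∀ i, ∀ x y : EuclideanSpace ℝ (Fin d), |f i x - f i y| ≤ G_l * ‖x - y‖)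
    (w : Fin m → EuclideanSpace ℝ (Fin d)) (wbar : EuclideanSpace ℝ (Fin d))
    (Δ : ℝ) (hΔ : 0 ≤ Δ)
    (hcons : ∀ i, ‖gradient φ (w i) - gradient φ wbar‖ ≤ Δ) :
    (∀ i, ‖w i - wbar‖ ≤ (r * Δ / (2 * σ)) ^ (1 / (r - 1))) ∧
    ∑ i, f i wbar - ∑ i, f i (w i)
      ≤ (m : ℝ) * G_l * (r * Δ / (2 * σ)) ^ (1 / (r - 1)) := by
  have hr0 : (0:ℝ) < r := by linarith
  have hr1 : (0:ℝ) < r - 1 := by linarith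
  have hbase : 0 ≤ r * Δ / (2 * σ) := by positivity
  have hRHS : 0 ≤ (r * Δ / (2 * σ)) ^ (1 / (r - 1)) := Real.rpow_nonneg hbase _
  have key : ∀ i, ‖w i - wbar‖ ≤ (r * Δ / (2 * σ)) ^ (1 / (r - 1)) := by
    intro i
    set z : EuclideanSpace ℝ (Fin d) := w i - wbar with hz
    have h1 := hUC (w i) wbar
    have h2 := hUC wbar (w i)
    have e1 : wbar - w i = -z := (neg_sub (w i) wbar).symm
    have hnorm : ‖wbar - w i‖ = ‖z‖ := by rw [e1, norm_neg]
    rw [e1, norm_neg, inner_neg_right] at h2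
    -- combine: 2*(σ/r)*‖z‖^r ≤ ⟪g(w i) - g wbar, z⟫
    have hsum : 2 * (σ / r) * ‖z‖ ^ r ≤ ⟪gradient φ (w i) - gradient φ wbar, z⟫ := by
      rw [inner_sub_left]
      linarith
    have hCS : ⟪gradient φ (w i) - gradient φ wbar, z⟫ ≤ Δ * ‖z‖ := by
      calc ⟪gradient φ (w i) - gradient φ wbar, z⟫
          ≤ ‖gradient φ (w i) - gradient φ wbar‖ * ‖z‖ := real_inner_le_norm _ _
        _ ≤ Δ * ‖z‖ := by
            apply mul_le_mul_of_nonneg_right (hcons i) (norm_nonneg _)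
    have hmain : 2 * (σ / r) * ‖z‖ ^ r ≤ Δ * ‖z‖ := le_trans hsum hCS
    rcases eq_or_lt_of_le (norm_nonneg z) with h0 | h0
    · rw [← h0]; exact hRHS
    · set t : ℝ := ‖z‖
      have hpow : t ^ r = t ^ (r - 1) * t := by
        have h := Real.rpow_add h0 (r - 1) 1
        rw [sub_add_cancel, Real.rpow_one] at h
        exact h
      rw [hpow] at hmain
      have h3 : 2 * (σ / r) * t ^ (r - 1) ≤ Δ := by
        have := (mul_le_mul_iff_of_pos_right h0).mp (by linarith : (2 * (σ / r) * t ^ (r - 1)) * t ≤ Δ * t)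
        exact this
      have h4 : t ^ (r - 1) ≤ r * Δ / (2 * σ) := by
        rw [le_div_iff₀ (by positivity)]
        have h5 := mul_le_mul_of_nonneg_right h3 hr0.le
        have hrne : r ≠ 0 := ne_of_gt hr0
        field_simp at h5
        nlinarith [h5]
      calc t = (t ^ (r - 1)) ^ (1 / (r - 1)) := by
              rw [← Real.rpow_mul h0.le, mul_one_div_cancel (ne_of_gt hr1), Real.rpow_one]
        _ ≤ (r * Δ / (2 * σ)) ^ (1 / (r - 1)) :=
              Real.rpow_le_rpow (Real.rpow_nonneg h0.le _) h4 (by positivity)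
  refine ⟨key, ?_⟩
  have hterm : ∀ i : Fin m, f i wbar - f i (w i) ≤ G_l * (r * Δ / (2 * σ)) ^ (1 / (r - 1)) := by
    intro i
    calc f i wbar - f i (w i) ≤ |f i wbar - f i (w i)| := le_abs_self _
      _ ≤ G_l * ‖wbar - w i‖ := hLip i _ _
      _ = G_l * ‖w i - wbar‖ := by rw [norm_sub_rev]
      _ ≤ G_l * (r * Δ / (2 * σ)) ^ (1 / (r - 1)) :=
          mul_le_mul_of_nonneg_left (key i) hG
  calc ∑ i, f i wbar - ∑ i, f i (w i) = ∑ i, (f i wbar - f i (w i)) := by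
        rw [Finset.sum_sub_distrib]
    _ ≤ ∑ _i : Fin m, G_l * (r * Δ / (2 * σ)) ^ (1 / (r - 1)) :=
        Finset.sum_le_sum fun i _ => hterm i
    _ = (m : ℝ) * G_l * (r * Δ / (2 * σ)) ^ (1 / (r - 1)) := by
        simp [Finset.sum_const, Finset.card_univ]; ring
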